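/- If p ∈ ℝ^d is a maximizer (i.e. all entries of p are positive, p_1 = 1, and min_{w ∈ W_d} G(p,w) ≥ min_{w ∈ W_d} G(q,w) for every q in the positive orthant), then D_2(p) = D_1(p) = max_j D_j(p), and moreover p_2 = 1/√3 and p_j = √(2/3)/(j−1) for every j ∈ {3,...,d}. -/

import Mathlib

def wvec (d : ℕ) (j : Fin d) : Fin d → ℕ :=
  fun i => if i < j then 0 else if i = j then (j : ℕ) + 1 else (i : ℕ)

noncomputable def G (d : ℕ) (p : Fin d → ℝ) (w : Fin d → ℕ) : ℝ :=
  (∏ i, p i) / (Real.sqrt (∑ i, ((w i : ℝ)) ^ 2 * p i ^ 2)) ^ d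

noncomputable def minG (d : ℕ) (p : Fin d → ℝ) : ℝ :=
  ⨅ j : Fin d, G d p (wvec d j)

noncomputable def D (d : ℕ) (j : Fin d) (p : Fin d → ℝ) : ℝ :=
  Real.sqrt (∑ i, ((wvec d j i : ℝ)) ^ 2 * p i ^ 2)

/-- `p*`: `p*_1 = 1`, `p*_2 = 1/√3`, `p*_j = √(2/3)/(j−1)` for `3 ≤ j ≤ d`
(0-based: index `i` has 1-based position `i+1`, so the denominator `j−1` is `i`). -/
noncomputable def pstar (d : ℕ) : Fin d → ℝ :=
  fun i => if (i : ℕ) = 0 then 1 else if (i : ℕ) = 1 then 1 / Real.sqrt 3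
    else Real.sqrt (2 / 3) / ((i : ℕ) : ℝ)
open Finset

noncomputable def Sq (d : ℕ) (j : Fin d) (p : Fin d → ℝ) : ℝ :=
  ∑ i, ((wvec d j i : ℝ)) ^ 2 * p i ^ 2

lemma wvec_val (d : ℕ) (j i : Fin d) :
    wvec d j i = if (i:ℕ) < (j:ℕ) then 0 else if (i:ℕ) = (j:ℕ) then (j:ℕ)+1 else (i:ℕ) := by
  unfold wvec
  simp only [Fin.lt_def, Fin.ext_iff]

lemma D_eq_sqrt (d : ℕ) (j : Fin d) (p : Fin d → ℝ) : D d j p = Real.sqrt (Sq d j p) := rfl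

lemma G_eq (d : ℕ) (j : Fin d) (p : Fin d → ℝ) :
    G d p (wvec d j) = (∏ i, p i) / Real.sqrt (Sq d j p) ^ d := rfl

lemma Sq_pos (d : ℕ) (j : Fin d) (p : Fin d → ℝ) (hp : ∀ i, 0 < p i) : 0 < Sq d j p := by
  apply Finset.sum_pos' (fun i _ => by positivity)
  refine ⟨j, mem_univ _, ?_⟩
  have hw : wvec d j j = (j:ℕ)+1 := by rw [wvec_val]; simp
  rw [hw]
  have := hp j
  positivity

lemma minG_le (d : ℕ) (j : Fin d) (p : Fin d → ℝ) :
    minG d p ≤ (∏ i, p i) / Real.sqrt (Sq d j p) ^ d :=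
  ciInf_le (Finite.bddBelow_range _) j

/-- AM-GM with equality case, via `x + 1 ≤ exp x`. -/
lemma amgm {d : ℕ} (hd : 0 < d) (z : Fin d → ℝ) (hz : ∀ i, 0 < z i) :
    ∏ i, z i ≤ ((∑ i, z i) / d) ^ d ∧
      (∏ i, z i = ((∑ i, z i) / d) ^ d → ∀ i, z i = (∑ i, z i) / d) := by
  have hne : Nonempty (Fin d) := Fin.pos_iff_nonempty.mp hd
  have hdpos : (0:ℝ) < d := by exact_mod_cast hd
  set s := ∑ i, z i with hs
  have hspos : 0 < s := Finset.sum_pos (fun i _ => hz i) univ_nonempty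
  set a := s / d with ha
  have hapos : 0 < a := div_pos hspos hdpos
  have key : ∀ i, z i ≤ a * Real.exp (z i / a - 1) := by
    intro i
    have h := Real.add_one_le_exp (z i / a - 1)
    have h2 := mul_le_mul_of_nonneg_left h hapos.le
    have h3 : a * (z i / a - 1 + 1) = z i := by field_simp; ring
    linarith
  have keylt : ∀ i, z i ≠ a → z i < a * Real.exp (z i / a - 1) := by
    intro i hne'
    have hx : z i / a - 1 ≠ 0 := by
      intro h
      apply hne'
      have : z i / a = 1 := by linarith
      field_simp at this
      linarith
    have h := Real.add_one_lt_exp hx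
    have h2 := mul_lt_mul_of_pos_left h hapos
    have h3 : a * (z i / a - 1 + 1) = z i := by field_simp; ring
    linarith
  have hprod_exp : ∏ i, (a * Real.exp (z i / a - 1)) = a ^ d := by
    rw [Finset.prod_mul_distrib, Finset.prod_const, Finset.card_univ, Fintype.card_fin,
      ← Real.exp_sum]
    have hsum0 : ∑ i : Fin d, (z i / a - 1) = 0 := by
      rw [Finset.sum_sub_distrib, ← Finset.sum_div, ← hs, Finset.sum_const, Finset.card_univ,
        Fintype.card_fin, ha]
      field_simp
      simp
    rw [hsum0, Real.exp_zero, mul_one]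
  constructor
  · calc ∏ i, z i ≤ ∏ i, (a * Real.exp (z i / a - 1)) :=
        Finset.prod_le_prod (fun i _ => (hz i).le) (fun i _ => key i)
    _ = a ^ d := hprod_exp
  · intro heq i
    by_contra hne'
    have hlt : ∏ i, z i < ∏ i, (a * Real.exp (z i / a - 1)) :=
      Finset.prod_lt_prod (fun i _ => hz i) (fun i _ => key i) ⟨i, mem_univ _, keylt i hne'⟩
    rw [hprod_exp] at hlt
    exact absurd heq (ne_of_lt hlt)

/-- The "cost" weights. -/
noncomputable def cw (d : ℕ) : Fin d → ℝ :=
  fun i => if (i:ℕ) = 0 then 2 else if (i:ℕ) = 1 then 6 else 3 * ((i:ℕ):ℝ)^2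

lemma cw_pos (d : ℕ) (i : Fin d) : 0 < cw d i := by
  unfold cw
  split_ifs with h0 h1
  · norm_num
  · norm_num
  · have h : 0 < (i:ℕ) := Nat.pos_of_ne_zero h0
    have h' : (0:ℝ) < (i:ℕ) := by exact_mod_cast h
    positivity

lemma wvec_zero (d : ℕ) (hd : 0 < d) (i : Fin d) :
    wvec d ⟨0, hd⟩ i = if (i:ℕ) = 0 then 1 else (i:ℕ) := by
  rw [wvec_val]
  simp only [Fin.val_mk]
  split_ifs <;> omega

lemma wvec_one (d : ℕ) (hd : 1 < d) (i : Fin d) :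
    wvec d ⟨1, hd⟩ i = if (i:ℕ) = 0 then 0 else if (i:ℕ) = 1 then 2 else (i:ℕ) := by
  rw [wvec_val]
  simp only [Fin.val_mk]
  split_ifs <;> omega

lemma zsum (d : ℕ) (hd : 2 ≤ d) (p : Fin d → ℝ) :
    ∑ i, cw d i * p i ^ 2 = 2 * Sq d ⟨0, by linarith⟩ p + Sq d ⟨1, by linarith⟩ p := by
  unfold Sq
  rw [Finset.mul_sum, ← Finset.sum_add_distrib]
  apply Finset.sum_congr rfl
  intro i _
  rw [wvec_zero d (by omega) i, wvec_one d (by omega) i]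
  unfold cw
  rcases Nat.lt_or_ge (i:ℕ) 2 with h | h
  · interval_cases h' : (i:ℕ) <;> norm_num <;> ring
  · rw [if_neg (by omega), if_neg (by omega), if_neg (by omega), if_neg (by omega),
      if_neg (by omega)]
    push_cast
    ring

lemma Sq_zero_eq (d : ℕ) (hd : 2 ≤ d) (q : Fin d → ℝ)
    (h0 : q ⟨0, by linarith⟩ ^ 2 = 1) (h1 : q ⟨1, by linarith⟩ ^ 2 = 1/3)
    (h2 : ∀ i : Fin d, 2 ≤ (i:ℕ) → ((i:ℕ):ℝ)^2 * q i^2 = 2/3) :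
    Sq d ⟨0, by linarith⟩ q = 2 * d / 3 := by
  unfold Sq
  have step : ∀ i : Fin d, ((wvec d ⟨0, by omega⟩ i : ℝ))^2 * q i^2
      = if (i:ℕ) = 0 then (1:ℝ) else if (i:ℕ) = 1 then 1/3 else 2/3 := by
    intro i
    rw [wvec_zero d (by omega) i]
    rcases Nat.lt_or_ge (i:ℕ) 2 with h | h
    · interval_cases h' : (i:ℕ)
      · have hi : i = ⟨0, by omega⟩ := Fin.ext h'
        rw [if_pos rfl, if_pos rfl, hi, h0]
        norm_num
      · have hi : i = ⟨1, by omega⟩ := Fin.ext h'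
        rw [if_neg (by omega), if_neg (by omega), if_pos rfl, hi, h1]
        norm_num
    · rw [if_neg (by omega), if_neg (by omega), if_neg (by omega)]
      exact h2 i h
  rw [Finset.sum_congr rfl (fun i _ => step i)]
  have hconv : ∑ i : Fin d, (if (i:ℕ) = 0 then (1:ℝ) else if (i:ℕ) = 1 then 1/3 else 2/3)
      = ∑ n ∈ range d, (if n = 0 then (1:ℝ) else if n = 1 then 1/3 else 2/3) :=
    Fin.sum_univ_eq_sum_range (fun n => if n = 0 then (1:ℝ) else if n = 1 then 1/3 else 2/3) d
  rw [hconv, range_eq_Ico, ← Finset.sum_Ico_consecutive _ (by omega : 0 ≤ 2) hd]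
  have hIco : (Finset.Ico 0 2 : Finset ℕ) = {0, 1} := rfl
  have h12 : ∑ n ∈ Finset.Ico 0 2, (if n = 0 then (1:ℝ) else if n = 1 then 1/3 else 2/3)
      = 4/3 := by
    rw [hIco, Finset.sum_pair (by omega : (0:ℕ) ≠ 1)]
    norm_num
  have htail : ∑ n ∈ Finset.Ico 2 d, (if n = 0 then (1:ℝ) else if n = 1 then 1/3 else 2/3)
      = (d - 2 : ℝ) * (2/3) := by
    have hc : ∀ x ∈ Finset.Ico 2 d, (if x = 0 then (1:ℝ) else if x = 1 then 1/3 else 2/3) = 2/3 := by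
      intro x hx
      have := (Finset.mem_Ico.mp hx).1
      rw [if_neg (by omega), if_neg (by omega)]
    rw [Finset.sum_congr rfl hc, Finset.sum_const, Nat.card_Ico, nsmul_eq_mul, Nat.cast_sub hd]
    push_cast
    ring
  rw [h12, htail]
  ring

lemma Sq_le_Sq_zero (d : ℕ) (hd : 2 ≤ d) (q : Fin d → ℝ) (hq : ∀ i, 0 < q i)
    (h0 : q ⟨0, by linarith⟩ ^ 2 = 1) (h1 : q ⟨1, by linarith⟩ ^ 2 = 1/3)
    (h2 : ∀ i : Fin d, 2 ≤ (i:ℕ) → ((i:ℕ):ℝ)^2 * q i^2 = 2/3) (j : Fin d) :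
    Sq d j q ≤ Sq d ⟨0, by linarith⟩ q := by
  set i0 : Fin d := ⟨0, by omega⟩ with hi0def
  by_cases hj : j = i0
  · rw [hj]
  have hj1 : 1 ≤ (j:ℕ) := by
    rcases Nat.eq_zero_or_pos (j:ℕ) with h | h
    · exact absurd (Fin.ext (h.trans rfl)) hj
    · exact h
  set g : Fin d → ℝ := fun i => (((wvec d i0 i:ℝ))^2 - ((wvec d j i:ℝ))^2) * q i ^ 2 with hg
  have key : Sq d i0 q - Sq d j q = ∑ i, g i := by
    unfold Sq
    rw [← Finset.sum_sub_distrib]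
    exact Finset.sum_congr rfl (fun i _ => by simp only [hg]; ring)
  have hnn : ∀ i ∈ univ, i ∉ ({i0, j} : Finset (Fin d)) → 0 ≤ g i := by
    intro i _ hin
    simp only [Finset.mem_insert, Finset.mem_singleton, not_or] at hin
    obtain ⟨hio, hij⟩ := hin
    have hi0' : (i:ℕ) ≠ 0 := fun h => hio (Fin.ext (h.trans rfl))
    have hijv : (i:ℕ) ≠ (j:ℕ) := fun h => hij (Fin.ext h)
    have hw : wvec d j i ≤ wvec d i0 i := by
      rw [wvec_val, hi0def, wvec_zero]
      split_ifs <;> omega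
    have hwr : ((wvec d j i : ℝ))^2 ≤ ((wvec d i0 i : ℝ))^2 := by
      have hc : ((wvec d j i : ℝ)) ≤ ((wvec d i0 i : ℝ)) := by exact_mod_cast hw
      exact pow_le_pow_left₀ (Nat.cast_nonneg _) hc 2
    simp only [hg]
    nlinarith [sq_nonneg (q i)]
  have hbound := Finset.sum_le_sum_of_subset_of_nonneg (subset_univ ({i0, j} : Finset (Fin d))) hnn
  rw [Finset.sum_pair (fun h => hj h.symm)] at hbound
  have gi0 : g i0 = q i0 ^ 2 := by
    simp only [hg]
    have e1 : wvec d i0 i0 = 1 := by rw [hi0def, wvec_zero]; simp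
    have e2 : wvec d j i0 = 0 := by
      rw [wvec_val]
      rw [if_pos]
      simp only [hi0def, Fin.val_mk]
      omega
    rw [e1, e2]
    norm_num
  have gj : g j = (((j:ℕ):ℝ)^2 - (((j:ℕ):ℝ)+1)^2) * q j ^ 2 := by
    simp only [hg]
    have e1 : wvec d i0 j = (j:ℕ) := by
      rw [hi0def, wvec_zero, if_neg (by omega)]
    have e2 : wvec d j j = (j:ℕ) + 1 := by
      rw [wvec_val, if_neg (by omega), if_pos rfl]
    rw [e1, e2]
    push_cast
    ring
  have hq0 : q i0 ^ 2 = 1 := h0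
  have hfinal : 0 ≤ g i0 + g j := by
    rw [gi0, gj, hq0]
    rcases Nat.lt_or_ge (j:ℕ) 2 with h | h
    · have hjv : (j:ℕ) = 1 := by omega
      have hjf : j = ⟨1, by omega⟩ := Fin.ext hjv
      rw [hjf] at *
      rw [h1]
      norm_num
    · have hjq := h2 j h
      have hjr : (2:ℝ) ≤ ((j:ℕ):ℝ) := by exact_mod_cast h
      have hjpos : (0:ℝ) < ((j:ℕ):ℝ) := by linarith
      have hne : ((j:ℕ):ℝ) ≠ 0 := by positivity
      have hu : q j ^ 2 = 2 / (3 * ((j:ℕ):ℝ)^2) := by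
        field_simp
        linear_combination 3 * hjq
      rw [hu]
      have key2 : 1 + (((j:ℕ):ℝ)^2 - (((j:ℕ):ℝ)+1)^2) * (2/(3*((j:ℕ):ℝ)^2))
          = (3*((j:ℕ):ℝ)^2 - 4*((j:ℕ):ℝ) - 2)/(3*((j:ℕ):ℝ)^2) := by
        field_simp
        ring
      have : (0:ℝ) ≤ (3*((j:ℕ):ℝ)^2 - 4*((j:ℕ):ℝ) - 2)/(3*((j:ℕ):ℝ)^2) := by
        apply div_nonneg _ (by positivity)
        nlinarith [hjr]
      linarith [key2, this]
  linarith [hbound, key, hfinal]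

lemma cwq (d : ℕ) (hd : 2 ≤ d) (q : Fin d → ℝ)
    (h0 : q ⟨0, by linarith⟩ ^ 2 = 1) (h1 : q ⟨1, by linarith⟩ ^ 2 = 1/3)
    (h2 : ∀ i : Fin d, 2 ≤ (i:ℕ) → ((i:ℕ):ℝ)^2 * q i^2 = 2/3) (i : Fin d) :
    cw d i * q i ^ 2 = 2 := by
  unfold cw
  rcases Nat.lt_or_ge (i:ℕ) 2 with h | h
  · interval_cases h' : (i:ℕ)
    · have hi : i = ⟨0, by omega⟩ := Fin.ext h'
      rw [if_pos rfl, hi, h0]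
      norm_num
    · have hi : i = ⟨1, by omega⟩ := Fin.ext h'
      rw [if_neg (by omega), if_pos rfl, hi, h1]
      norm_num
  · rw [if_neg (by omega), if_neg (by omega), mul_assoc, h2 i h]
    norm_num

lemma zprod (d : ℕ) (hd : 2 ≤ d) (q : Fin d → ℝ)
    (h0 : q ⟨0, by linarith⟩ ^ 2 = 1) (h1 : q ⟨1, by linarith⟩ ^ 2 = 1/3)
    (h2 : ∀ i : Fin d, 2 ≤ (i:ℕ) → ((i:ℕ):ℝ)^2 * q i^2 = 2/3) :
    (∏ i, cw d i) * (∏ i, q i) ^ 2 = 2 ^ d := by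
  rw [← Finset.prod_pow, ← Finset.prod_mul_distrib,
    Finset.prod_congr rfl (fun i _ => cwq d hd q h0 h1 h2 i), Finset.prod_const,
    Finset.card_univ, Fintype.card_fin]

lemma minG_eq (d : ℕ) (hd : 2 ≤ d) (q : Fin d → ℝ) (hq : ∀ i, 0 < q i)
    (h0 : q ⟨0, by linarith⟩ ^ 2 = 1) (h1 : q ⟨1, by linarith⟩ ^ 2 = 1/3)
    (h2 : ∀ i : Fin d, 2 ≤ (i:ℕ) → ((i:ℕ):ℝ)^2 * q i^2 = 2/3) :
    minG d q = (∏ i, q i) / Real.sqrt (2 * d / 3) ^ d := by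
  have hne : Nonempty (Fin d) := ⟨⟨0, by omega⟩⟩
  have hA := Sq_zero_eq d hd q h0 h1 h2
  apply le_antisymm
  · have h := minG_le d ⟨0, by omega⟩ q
    rwa [hA] at h
  · apply le_ciInf
    intro j
    rw [G_eq]
    have hSqpos := Sq_pos d j q hq
    have hle : Real.sqrt (Sq d j q) ^ d ≤ Real.sqrt (2 * d / 3) ^ d := by
      apply pow_le_pow_left₀ (Real.sqrt_nonneg _)
      apply Real.sqrt_le_sqrt
      rw [← hA]
      exact Sq_le_Sq_zero d hd q hq h0 h1 h2 j
    exact div_le_div_of_nonneg_left (Finset.prod_nonneg (fun i _ => (hq i).le)) (by positivity) hle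

lemma pstar_pos (d : ℕ) (i : Fin d) : 0 < pstar d i := by
  unfold pstar
  split_ifs with ha hb
  · norm_num
  · positivity
  · have h : 0 < (i:ℕ) := Nat.pos_of_ne_zero ha
    have h' : (0:ℝ) < ((i:ℕ):ℝ) := by exact_mod_cast h
    positivity

lemma pstar_h0 (d : ℕ) (hd : 2 ≤ d) : pstar d ⟨0, by linarith⟩ ^ 2 = 1 := by
  unfold pstar
  norm_num

lemma pstar_h1 (d : ℕ) (hd : 2 ≤ d) : pstar d ⟨1, by linarith⟩ ^ 2 = 1/3 := by
  unfold pstar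
  norm_num [div_pow, Real.sq_sqrt (by norm_num : (0:ℝ) ≤ 3)]

lemma pstar_h2 (d : ℕ) (hd : 2 ≤ d) (i : Fin d) (h : 2 ≤ (i:ℕ)) :
    ((i:ℕ):ℝ)^2 * pstar d i ^ 2 = 2/3 := by
  unfold pstar
  rw [if_neg (by omega), if_neg (by omega), div_pow,
    Real.sq_sqrt (by norm_num : (0:ℝ) ≤ 2/3)]
  have h' : ((i:ℕ):ℝ) ≠ 0 := by
    have : 0 < (i:ℕ) := by omega
    positivity
  field_simp

/-- If `p` is a maximizer, then `D_2(p) = D_1(p) = max_j D_j(p)`, and moreover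
`p_2 = 1/√3` and `p_j = √(2/3)/(j−1)` for `j ∈ {3,…,d}`. -/
theorem stmt10 (d : ℕ) (hd : 2 ≤ d) (p : Fin d → ℝ)
    (hp : ∀ i, 0 < p i) (h1 : p ⟨0, by omega⟩ = 1)
    (hmax : ∀ q : Fin d → ℝ, (∀ i, 0 < q i) → minG d q ≤ minG d p) :
    D d ⟨1, by omega⟩ p = D d ⟨0, by omega⟩ p ∧
      IsGreatest (Set.range fun j : Fin d => D d j p) (D d ⟨0, by omega⟩ p) ∧
      p ⟨1, by omega⟩ = 1 / Real.sqrt 3 ∧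
      ∀ j : Fin d, 2 ≤ (j : ℕ) → p j = Real.sqrt (2 / 3) / ((j : ℕ) : ℝ) := by
  have hd0 : 0 < d := by omega
  have hne : Nonempty (Fin d) := ⟨⟨0, hd0⟩⟩
  have hdR : (0:ℝ) < d := by exact_mod_cast hd0
  set i0 : Fin d := ⟨0, by omega⟩ with hi0
  set i1 : Fin d := ⟨1, by omega⟩ with hi1
  set P := ∏ i, p i with hP
  have hPpos : 0 < P := Finset.prod_pos (fun i _ => hp i)
  set A := Sq d i0 p with hA
  set B := Sq d i1 p with hB
  have hApos : 0 < A := Sq_pos d i0 p hp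
  have hBpos : 0 < B := Sq_pos d i1 p hp
  set m := max A B with hm
  have hmpos : 0 < m := lt_of_lt_of_le hApos (le_max_left _ _)
  have hAm : A ≤ m := le_max_left _ _
  have hBm : B ≤ m := le_max_right _ _
  set z : Fin d → ℝ := fun i => cw d i * p i ^ 2 with hzdef
  have hzpos : ∀ i, 0 < z i := fun i => mul_pos (cw_pos d i) (pow_pos (hp i) 2)
  have hzsum : ∑ i, z i = 2 * A + B := zsum d hd p
  have hzsumnn : 0 ≤ ∑ i, z i := Finset.sum_nonneg (fun i _ => (hzpos i).le)
  have hzsum_le : ∑ i, z i ≤ 3 * m := by rw [hzsum]; linarith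
  set Cq := ∏ i, cw d i with hCq
  have hCpos : 0 < Cq := Finset.prod_pos (fun i _ => cw_pos d i)
  have hCP : ∏ i, z i = Cq * P ^ 2 := by
    rw [hzdef, hCq, hP, ← Finset.prod_pow, ← Finset.prod_mul_distrib]
  obtain ⟨hAM, hAMeq⟩ := amgm hd0 z hzpos
  -- pstar side
  have hq0 := pstar_h0 d hd
  have hq1 := pstar_h1 d hd
  have hq2 := pstar_h2 d hd
  have hqpos := pstar_pos d
  set Pq := ∏ i, pstar d i with hPq
  have hPqpos : 0 < Pq := Finset.prod_pos (fun i _ => hqpos i)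
  have hCq2 : Cq * Pq ^ 2 = 2 ^ d := zprod d hd (pstar d) hq0 hq1 hq2
  have hminq : minG d (pstar d) = Pq / Real.sqrt (2 * d / 3) ^ d :=
    minG_eq d hd (pstar d) hqpos hq0 hq1 hq2
  have h23pos : (0:ℝ) < 2 * d / 3 := by positivity
  have hsq23 : (Real.sqrt (2 * (d:ℝ) / 3) ^ d) ^ 2 = (2 * (d:ℝ) / 3) ^ d := by
    rw [← pow_mul, mul_comm d 2, pow_mul, Real.sq_sqrt h23pos.le]
  have hsqm : (Real.sqrt m ^ d) ^ 2 = m ^ d := by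
    rw [← pow_mul, mul_comm d 2, pow_mul, Real.sq_sqrt hmpos.le]
  have hsqmpos : 0 < Real.sqrt m ^ d := pow_pos (Real.sqrt_pos.mpr hmpos) d
  have hsq23pos : 0 < Real.sqrt (2 * (d:ℝ) / 3) ^ d := pow_pos (Real.sqrt_pos.mpr h23pos) d
  have hkey : ((3*m/(d:ℝ))^d) * ((2*(d:ℝ)/3)^d) = 2^d * m^d := by
    rw [← mul_pow, ← mul_pow]
    congr 1
    field_simp
  -- upper bound: minG p ≤ P / sqrt m ^ d
  have hub : minG d p ≤ P / Real.sqrt m ^ d := by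
    rcases max_cases A B with ⟨he, _⟩ | ⟨he, _⟩
    · calc minG d p ≤ P / Real.sqrt (Sq d i0 p) ^ d := minG_le d i0 p
        _ = P / Real.sqrt m ^ d := by rw [← hA, hm, he]
    · calc minG d p ≤ P / Real.sqrt (Sq d i1 p) ^ d := minG_le d i1 p
        _ = P / Real.sqrt m ^ d := by rw [← hB, hm, he]
  -- AM-GM bound
  have hPbound2 : Cq * P^2 ≤ (3*m/(d:ℝ))^d := by
    calc Cq * P^2 = ∏ i, z i := hCP.symm
      _ ≤ ((∑ i, z i)/(d:ℝ))^d := hAM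
      _ ≤ (3*m/(d:ℝ))^d := by
          apply pow_le_pow_left₀ (div_nonneg hzsumnn hdR.le)
          exact (div_le_div_iff_of_pos_right hdR).mpr hzsum_le
  -- the crucial inequality
  have hcrucial : P / Real.sqrt m ^ d ≤ Pq / Real.sqrt (2*(d:ℝ)/3) ^ d := by
    apply le_of_pow_le_pow_left₀ two_ne_zero (by positivity)
    rw [div_pow, div_pow, hsqm, hsq23, div_le_div_iff₀ (by positivity) (by positivity)]
    have h2 : Cq * P^2 * (2*(d:ℝ)/3)^d ≤ (3*m/(d:ℝ))^d * (2*(d:ℝ)/3)^d :=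
      mul_le_mul_of_nonneg_right hPbound2 (by positivity)
    rw [hkey, ← hCq2] at h2
    have h3 : Cq * (P ^ 2 * (2 * (d:ℝ) / 3) ^ d) ≤ Cq * (Pq ^ 2 * m ^ d) := by
      calc Cq * (P ^ 2 * (2 * (d:ℝ) / 3) ^ d) = Cq * P^2 * (2*(d:ℝ)/3)^d := by ring
        _ ≤ Cq * Pq^2 * m^d := h2
        _ = Cq * (Pq^2 * m^d) := by ring
    exact le_of_mul_le_mul_left h3 hCpos
  -- chain of equalities
  have hle1 : minG d (pstar d) ≤ minG d p := hmax (pstar d) hqpos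
  have heq : P / Real.sqrt m ^ d = Pq / Real.sqrt (2*(d:ℝ)/3) ^ d := by
    apply le_antisymm hcrucial
    rw [← hminq]
    exact le_trans hle1 hub
  -- extract the product equality
  have hprodeq : ∏ i, z i = (3*m/(d:ℝ))^d := by
    have hsq : P^2 * (2*(d:ℝ)/3)^d = Pq^2 * m^d := by
      have h := congrArg (fun x : ℝ => x^2) heq
      simp only [div_pow] at h
      rw [hsqm, hsq23, div_eq_div_iff (by positivity) (by positivity)] at h
      exact h
    have h4 : Cq * P^2 * (2*(d:ℝ)/3)^d = (3*m/(d:ℝ))^d * (2*(d:ℝ)/3)^d := by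
      rw [hkey, ← hCq2]
      calc Cq * P^2 * (2*(d:ℝ)/3)^d = Cq * (P^2 * (2*(d:ℝ)/3)^d) := by ring
        _ = Cq * (Pq^2 * m^d) := by rw [hsq]
        _ = Cq * Pq^2 * m^d := by ring
    have h5 : Cq * P^2 = (3*m/(d:ℝ))^d := mul_right_cancel₀ (by positivity) h4
    rw [hCP, h5]
  -- equality forcing in AM-GM
  have hsum3m : ∑ i, z i = 3 * m := by
    by_contra hne'
    have hlt : ∑ i, z i < 3 * m := lt_of_le_of_ne hzsum_le hne'
    have hlt2 : ((∑ i, z i)/(d:ℝ))^d < (3*m/(d:ℝ))^d := by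
      apply pow_lt_pow_left₀ ((div_lt_div_iff_of_pos_right hdR).mpr hlt) (div_nonneg hzsumnn hdR.le)
      omega
    have := lt_of_le_of_lt hAM hlt2
    rw [hprodeq] at this
    exact absurd this (lt_irrefl _)
  have hzall : ∀ i, z i = 3 * m / (d:ℝ) := by
    have h := hAMeq (by rw [hprodeq, hsum3m])
    intro i
    rw [h i, hsum3m]
  -- pin down the values
  have hz0 : z i0 = 2 := by
    show cw d i0 * p i0 ^ 2 = 2
    have hcw : cw d i0 = 2 := by unfold cw; rw [if_pos rfl]
    rw [hcw, h1]
    norm_num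
  have hmval : m = 2 * (d:ℝ) / 3 := by
    have h := hzall i0
    rw [hz0] at h
    field_simp at h
    linarith
  have hrhs : 3 * m / (d:ℝ) = 2 := by
    rw [hmval]
    field_simp
  have hz1 : p i1 ^ 2 = 1/3 := by
    have h := hzall i1
    rw [hrhs] at h
    have hcw : cw d i1 = 6 := by unfold cw; rw [if_neg (by norm_num), if_pos rfl]
    have h' : cw d i1 * p i1 ^ 2 = 2 := h
    rw [hcw] at h'
    linarith
  have hz2 : ∀ j : Fin d, 2 ≤ (j:ℕ) → ((j:ℕ):ℝ)^2 * p j^2 = 2/3 := by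
    intro j hj
    have h := hzall j
    rw [hrhs] at h
    have hcw : cw d j = 3*((j:ℕ):ℝ)^2 := by unfold cw; rw [if_neg (by omega), if_neg (by omega)]
    have h' : cw d j * p j ^ 2 = 2 := h
    rw [hcw] at h'
    linarith
  have hp0 : p i0 ^ 2 = 1 := by rw [h1]; norm_num
  have hAeqm : A = m := by linarith [hzsum, hsum3m, hAm, hBm]
  have hBeqm : B = m := by linarith [hzsum, hsum3m, hAm, hBm]
  refine ⟨?_, ⟨⟨i0, rfl⟩, ?_⟩, ?_, ?_⟩
  · rw [D_eq_sqrt, D_eq_sqrt, ← hA, ← hB, hAeqm, hBeqm]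
  · rintro x ⟨j, rfl⟩
    show D d j p ≤ D d i0 p
    rw [D_eq_sqrt, D_eq_sqrt]
    exact Real.sqrt_le_sqrt (Sq_le_Sq_zero d hd p hp hp0 hz1 hz2 j)
  · have hppos := hp i1
    have h : p i1 = Real.sqrt (1/3) := by
      rw [← Real.sqrt_sq hppos.le, hz1]
    rw [h, one_div, Real.sqrt_inv, one_div]
  · intro j hj
    have hjpos : (0:ℝ) < ((j:ℕ):ℝ) := by
      have : 0 < (j:ℕ) := by omega
      exact_mod_cast this
    have hpj : p j ^ 2 = (2/3) / ((j:ℕ):ℝ)^2 := by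
      have hsqj := hz2 j hj
      field_simp
      linarith [hsqj]
    rw [← Real.sqrt_sq (hp j).le, hpj, Real.sqrt_div (by norm_num : (0:ℝ) ≤ 2/3),
      Real.sqrt_sq hjpos.le]
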